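/- For every N ≥ 1 and every τ ∈ {⇑,0,⇓}^N there exists a (unique) polynomial P_τ ∈ ℤ[X] such that ⟨τ|β^N|∧⟩ = y^N · P_τ(y²) holds in ℤ[y]. Consequently the supersymmetry singlet |Φ(x)⟩ := x^{−N/2} β(x)^N |∧⟩ is a vector all of whose components are polynomials in x with integer coefficients. -/

import Mathlib

open Matrix BigOperators Finset Polynomial

noncomputable section

/-- The 6×6 matrix ρ over ℤ[y] on ℂ²⊗ℂ³, basis `(ε, σ)`, ε ∈ {0=↑,1=↓}, σ ∈ {0=⇑,1=0,2=⇓}. -/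
def rho : Matrix (Fin 2 × Fin 3) (Fin 2 × Fin 3) (Polynomial ℤ) :=
  Matrix.of fun p p' =>
    if p = (0,0) ∧ p' = (0,0) then 1
    else if p = (0,1) ∧ p' = (1,0) then Polynomial.X
    else if p = (0,2) ∧ p' = (0,2) then -1
    else if p = (0,2) ∧ p' = (1,1) then Polynomial.X
    else if p = (1,0) ∧ p' = (0,1) then Polynomial.X
    else if p = (1,0) ∧ p' = (1,0) then -1
    else if p = (1,1) ∧ p' = (0,2) then Polynomial.X
    else if p = (1,2) ∧ p' = (1,2) then 1
    else 0

/-- ρ acting on the auxiliary ℂ² and the j-th site of `(ℂ³)^{⊗N}`. -/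
def rhoAt {N : ℕ} (j : Fin N) :
    Matrix (Fin 2 × (Fin N → Fin 3)) (Fin 2 × (Fin N → Fin 3)) (Polynomial ℤ) :=
  Matrix.of fun p p' =>
    rho (p.1, p.2 j) (p'.1, p'.2 j) * if ∀ k, k ≠ j → p.2 k = p'.2 k then 1 else 0

/-- The operator β = ⟨↑| ρ_{a,N} ⋯ ρ_{a,1} |↓⟩ on `(ℂ³)^{⊗N}`, with entries in ℤ[y]. -/
def betaMat (N : ℕ) : Matrix (Fin N → Fin 3) (Fin N → Fin 3) (Polynomial ℤ) :=
  Matrix.of fun σ τ =>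
    ((((List.finRange N).reverse).map fun j => rhoAt j).prod :
      Matrix (Fin 2 × (Fin N → Fin 3)) (Fin 2 × (Fin N → Fin 3)) (Polynomial ℤ)) (0, σ) (1, τ)

/-- The reference state `|∧⟩ = |⇑…⇑⟩`, with coefficients in ℤ[y]. -/
def vacP (N : ℕ) : (Fin N → Fin 3) → Polynomial ℤ := fun σ => if σ = fun _ => 0 then 1 else 0

/-- The component `⟨τ|β^N|∧⟩ ∈ ℤ[y]`. -/
def comp (N : ℕ) (τ : Fin N → Fin 3) : Polynomial ℤ :=
  ((betaMat N ^ N).mulVec (vacP N)) τ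


section Aux

variable {α : Type*} [Fintype α]

/-- Parity invariant: every monomial degree in entry `(p, p')` has parity `p.1 + p'.1`. -/
def ParInv (M : Matrix (Fin 2 × α) (Fin 2 × α) (Polynomial ℤ)) : Prop :=
  ∀ p p' : Fin 2 × α, ∀ k : ℕ, (M p p').coeff k ≠ 0 → k % 2 = (p.1.val + p'.1.val) % 2

lemma parInv_one [DecidableEq α] :
    ParInv (1 : Matrix (Fin 2 × α) (Fin 2 × α) (Polynomial ℤ)) := by
  intro p p' k h
  by_cases hpp : p = p'
  · subst hpp
    rw [Matrix.one_apply_eq, Polynomial.coeff_one] at h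
    have hk : k = 0 := by by_contra hk; simp [hk] at h
    omega
  · rw [Matrix.one_apply_ne hpp] at h
    simp at h

lemma parInv_mul {M M' : Matrix (Fin 2 × α) (Fin 2 × α) (Polynomial ℤ)}
    (hM : ParInv M) (hM' : ParInv M') : ParInv (M * M') := by
  intro p p'' k h
  by_contra hk
  apply h
  rw [Matrix.mul_apply, Polynomial.finset_sum_coeff]
  apply Finset.sum_eq_zero
  intro q _
  rw [Polynomial.coeff_mul]
  apply Finset.sum_eq_zero
  intro ij hij
  rw [Finset.HasAntidiagonal.mem_antidiagonal] at hij
  by_cases h1 : (M p q).coeff ij.1 = 0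
  · rw [h1, zero_mul]
  by_cases h2 : (M' q p'').coeff ij.2 = 0
  · rw [h2, mul_zero]
  exfalso
  have e1 := hM p q ij.1 h1
  have e2 := hM' q p'' ij.2 h2
  omega

lemma parInv_list_prod [DecidableEq α]
    (L : List (Matrix (Fin 2 × α) (Fin 2 × α) (Polynomial ℤ)))
    (h : ∀ M ∈ L, ParInv M) : ParInv L.prod := by
  induction L with
  | nil => simpa using parInv_one
  | cons A L ih =>
      rw [List.prod_cons]
      exact parInv_mul (h A List.mem_cons_self)
        (ih fun M hM => h M (List.mem_cons_of_mem A hM))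

end Aux

lemma parInv_rho (e e' : Fin 2) (s s' : Fin 3) (k : ℕ)
    (h : (rho (e, s) (e', s')).coeff k ≠ 0) : k % 2 = (e.val + e'.val) % 2 := by
  fin_cases e <;> fin_cases e' <;> fin_cases s <;> fin_cases s' <;>
    simp only [rho, Matrix.of_apply] at h <;>
    norm_num [Prod.ext_iff, Fin.ext_iff, Polynomial.coeff_X, Polynomial.coeff_one] at h <;>
    simp only [Fin.val] <;> omega

lemma parInv_rhoAt {N : ℕ} (j : Fin N) : ParInv (rhoAt j) := by
  rintro ⟨e, s⟩ ⟨e', s'⟩ k h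
  rw [rhoAt, Matrix.of_apply] at h
  by_cases hc : ∀ kk, kk ≠ j → s kk = s' kk
  · rw [if_pos hc, mul_one] at h
    exact parInv_rho e e' (s j) (s' j) k h
  · rw [if_neg hc, mul_zero, Polynomial.coeff_zero] at h
    exact absurd rfl h

section Aux2

variable {α : Type*} [Fintype α]

/-- Degree `≥ m` and parity `m` invariant on all entries of a matrix. -/
def DegGE (m : ℕ) (A : Matrix α α (Polynomial ℤ)) : Prop :=
  ∀ σ τ : α, ∀ k : ℕ, (A σ τ).coeff k ≠ 0 → m ≤ k ∧ k % 2 = m % 2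

lemma degGE_mul {m n : ℕ} {A B : Matrix α α (Polynomial ℤ)}
    (hA : DegGE m A) (hB : DegGE n B) : DegGE (m + n) (A * B) := by
  intro σ τ k h
  by_contra hk
  apply h
  rw [Matrix.mul_apply, Polynomial.finset_sum_coeff]
  apply Finset.sum_eq_zero
  intro q _
  rw [Polynomial.coeff_mul]
  apply Finset.sum_eq_zero
  intro ij hij
  rw [Finset.HasAntidiagonal.mem_antidiagonal] at hij
  by_cases h1 : (A σ q).coeff ij.1 = 0
  · rw [h1, zero_mul]
  by_cases h2 : (B q τ).coeff ij.2 = 0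
  · rw [h2, mul_zero]
  exfalso
  have e1 := hA σ q ij.1 h1
  have e2 := hB q τ ij.2 h2
  omega

lemma degGE_one [DecidableEq α] : DegGE 0 (1 : Matrix α α (Polynomial ℤ)) := by
  intro σ τ k h
  by_cases hst : σ = τ
  · subst hst
    rw [Matrix.one_apply_eq, Polynomial.coeff_one] at h
    have hk : k = 0 := by by_contra hk; simp [hk] at h
    omega
  · rw [Matrix.one_apply_ne hst] at h
    simp at h

lemma degGE_pow [DecidableEq α] {A : Matrix α α (Polynomial ℤ)} (hA : DegGE 1 A) (n : ℕ) :
    DegGE n (A ^ n) := by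
  induction n with
  | zero => simpa [pow_zero] using degGE_one
  | succ n ih =>
      rw [pow_succ]
      exact degGE_mul ih hA

end Aux2

lemma degGE_betaMat (N : ℕ) : DegGE 1 (betaMat N) := by
  have hpar : ParInv ((((List.finRange N).reverse).map fun j => rhoAt j).prod) := by
    apply parInv_list_prod
    intro M hM
    rw [List.mem_map] at hM
    obtain ⟨j, _, rfl⟩ := hM
    exact parInv_rhoAt j
  intro σ τ k h
  have := hpar (0, σ) (1, τ) k h
  simp only [Fin.val_zero, Fin.val_one] at this
  omega

lemma comp_eq (N : ℕ) (τ : Fin N → Fin 3) :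
    comp N τ = (betaMat N ^ N) τ (fun _ => 0) := by
  show ((betaMat N ^ N).mulVec (vacP N)) τ = _
  rw [Matrix.mulVec, dotProduct]
  rw [Finset.sum_eq_single (fun _ => (0 : Fin 3))]
  · simp [vacP]
  · intro b _ hb; simp [vacP, hb]
  · intro h; exact absurd (Finset.mem_univ _) h

/-- For every τ there is a unique polynomial `P_τ ∈ ℤ[X]` with
`⟨τ|β^N|∧⟩ = y^N · P_τ(y²)`; hence all components of the supersymmetry singlet
`|Φ(x)⟩ = x^{−N/2} β^N |∧⟩` are polynomials in `x = y²` with integer coefficients. -/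
theorem stmt19 (N : ℕ) (hN : 1 ≤ N) (τ : Fin N → Fin 3) :
    ∃! p : Polynomial ℤ, comp N τ = Polynomial.X ^ N * p.comp (Polynomial.X ^ 2) := by
  set q : Polynomial ℤ := comp N τ with hq
  have hdeg : ∀ k : ℕ, q.coeff k ≠ 0 → N ≤ k ∧ k % 2 = N % 2 := by
    intro k hk
    rw [hq, comp_eq] at hk
    exact degGE_pow (degGE_betaMat N) N τ (fun _ => 0) k hk
  set p : Polynomial ℤ :=
    ∑ i ∈ Finset.range (q.natDegree + 1), Polynomial.C (q.coeff (N + 2 * i)) * Polynomial.X ^ i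
    with hp
  have key : q = Polynomial.X ^ N * p.comp (Polynomial.X ^ 2) := by
    have hcomp : p.comp (Polynomial.X ^ 2) =
        ∑ i ∈ Finset.range (q.natDegree + 1),
          Polynomial.C (q.coeff (N + 2 * i)) * Polynomial.X ^ (2 * i) := by
      rw [hp, Polynomial.sum_comp]
      apply Finset.sum_congr rfl
      intro i _
      rw [Polynomial.mul_comp, Polynomial.C_comp, Polynomial.pow_comp, Polynomial.X_comp,
        ← pow_mul]
    rw [hcomp, Finset.mul_sum]
    ext k
    rw [Polynomial.finset_sum_coeff]
    have hterm : ∀ i, (Polynomial.X ^ N * (Polynomial.C (q.coeff (N + 2 * i)) *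
        Polynomial.X ^ (2 * i))).coeff k =
        if k = N + 2 * i then q.coeff (N + 2 * i) else 0 := by
      intro i
      rw [show Polynomial.X ^ N * (Polynomial.C (q.coeff (N + 2 * i)) * Polynomial.X ^ (2 * i))
        = Polynomial.C (q.coeff (N + 2 * i)) * Polynomial.X ^ (N + 2 * i) by
          rw [pow_add]; ring]
      rw [Polynomial.coeff_C_mul, Polynomial.coeff_X_pow, mul_ite, mul_one, mul_zero]
    simp only [hterm]
    by_cases hk : q.coeff k = 0
    · rw [hk]
      symm
      apply Finset.sum_eq_zero
      intro i _
      by_cases hi : k = N + 2 * i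
      · rw [if_pos hi, ← hi, hk]
      · rw [if_neg hi]
    · obtain ⟨hNk, hpar⟩ := hdeg k hk
      have hk0 : N + 2 * ((k - N) / 2) = k := by omega
      rw [Finset.sum_eq_single ((k - N) / 2)]
      · rw [if_pos hk0.symm, hk0]
      · intro i _ hi
        rw [if_neg]
        intro hcontra
        exact hi (by omega)
      · intro hmem
        exfalso
        apply hmem
        rw [Finset.mem_range]
        have := Polynomial.le_natDegree_of_ne_zero hk
        omega
  refine ⟨p, key, ?_⟩
  intro p' hp'
  have h2 : Polynomial.X ^ N * p'.comp (Polynomial.X ^ 2) =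
      Polynomial.X ^ N * p.comp (Polynomial.X ^ 2) := by rw [← hp', key]
  have hX : (Polynomial.X : Polynomial ℤ) ^ N ≠ 0 := pow_ne_zero N Polynomial.X_ne_zero
  have h3 : p'.comp (Polynomial.X ^ 2) = p.comp (Polynomial.X ^ 2) :=
    mul_left_cancel₀ hX h2
  have hinj := Polynomial.expand_injective (R := ℤ) (n := 2) (by norm_num)
  apply hinj
  rw [Polynomial.expand_eq_comp_X_pow, Polynomial.expand_eq_comp_X_pow]
  exact h3

end
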